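/- Let E be a separable complex Hilbert space, let H : 𝕋^d → B(E) be strongly measurable with ‖H(x)‖ ≤ C almost everywhere, and let 𝓗 be the induced decomposable operator on L²(𝕋^d; E), i.e., (𝓗f)(x) = H(x)(f(x)) almost everywhere for every f. Then 𝓗 has trivial kernel if and only if H(x) has trivial kernel for almost every x ∈ 𝕋^d. -/

import Mathlib

open MeasureTheory Filter Topology


section OpT

variable {E : Type*} [NormedAddCommGroup E] [InnerProductSpace ℂ E] [CompleteSpace E]

lemma re_ofReal_mul' (r : ℝ) (z : ℂ) : RCLike.re ((r:ℂ) * z) = r * RCLike.re z := by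
  simp [Complex.mul_re]

/-- The auxiliary positive contraction `1 - r • B* B`. -/
noncomputable def opT (B : E →L[ℂ] E) (r : ℝ) : E →L[ℂ] E :=
  1 - (r : ℂ) • ((ContinuousLinearMap.adjoint B).comp B)

lemma opT_apply (B : E →L[ℂ] E) (r : ℝ) (v : E) :
    opT B r v = v - (r:ℂ) • ContinuousLinearMap.adjoint B (B v) := by
  simp [opT, ContinuousLinearMap.sub_apply, ContinuousLinearMap.smul_apply,
    ContinuousLinearMap.one_apply]

lemma opT_symm (B : E →L[ℂ] E) (r : ℝ) (v w : E) :
    (inner ℂ (opT B r v) w : ℂ) = inner ℂ v (opT B r w) := by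
  rw [opT_apply, opT_apply, inner_sub_left, inner_sub_right, inner_smul_left, inner_smul_right,
    ContinuousLinearMap.adjoint_inner_left, ContinuousLinearMap.adjoint_inner_right,
    Complex.conj_ofReal]

lemma opT_fixed_of_ker (B : E →L[ℂ] E) (r : ℝ) {v : E} (hv : B v = 0) :
    opT B r v = v := by
  rw [opT_apply, hv, map_zero, smul_zero, sub_zero]

lemma opT_pow_fixed_of_ker (B : E →L[ℂ] E) (r : ℝ) {v : E} (hv : B v = 0) (k : ℕ) :
    (opT B r ^ k) v = v := by
  induction k with
  | zero => simp
  | succ k ih => rw [pow_succ, ContinuousLinearMap.mul_apply, opT_fixed_of_ker B r hv, ih]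

variable {B : E →L[ℂ] E} {r : ℝ} (hr0 : 0 < r) (hrB : r * ‖B‖^2 ≤ 1)

include hr0 hrB in
lemma opT_contract (v : E) : ‖opT B r v‖ ≤ ‖v‖ := by
  have hin : (inner ℂ v ((r:ℂ) • ContinuousLinearMap.adjoint B (B v)) : ℂ)
      = (r:ℂ) * inner ℂ (B v) (B v) := by
    rw [inner_smul_right, ContinuousLinearMap.adjoint_inner_right]
  have h1 : ‖opT B r v‖^2
      = ‖v‖^2 - 2 * (r * ‖B v‖^2) + ‖(r:ℂ) • ContinuousLinearMap.adjoint B (B v)‖^2 := by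
    rw [opT_apply, norm_sub_sq (𝕜 := ℂ), hin, re_ofReal_mul', inner_self_eq_norm_sq]
  have h2 : ‖(r:ℂ) • ContinuousLinearMap.adjoint B (B v)‖ ≤ r * (‖B‖ * ‖B v‖) := by
    rw [norm_smul]
    have : ‖(r:ℂ)‖ = r := by simp [abs_of_pos hr0]
    rw [this]
    refine mul_le_mul_of_nonneg_left ?_ hr0.le
    calc ‖ContinuousLinearMap.adjoint B (B v)‖
        ≤ ‖ContinuousLinearMap.adjoint B‖ * ‖B v‖ := (ContinuousLinearMap.adjoint B).le_opNorm _
      _ = ‖B‖ * ‖B v‖ := by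
          rw [LinearIsometryEquiv.norm_map ContinuousLinearMap.adjoint B]
  have h2' : ‖(r:ℂ) • ContinuousLinearMap.adjoint B (B v)‖^2 ≤ (r * (‖B‖ * ‖B v‖))^2 :=
    pow_le_pow_left₀ (norm_nonneg _) h2 2
  have h2'' : (r * (‖B‖ * ‖B v‖))^2 = (r * ‖B‖^2) * (r * ‖B v‖^2) := by ring
  have h2''' : (r * ‖B‖^2) * (r * ‖B v‖^2) ≤ 1 * (r * ‖B v‖^2) :=
    mul_le_mul_of_nonneg_right hrB (by positivity)
  have hpos : 0 ≤ r * ‖B v‖^2 := by positivity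
  have h3 : ‖opT B r v‖^2 ≤ ‖v‖^2 := by linarith
  nlinarith [norm_nonneg (opT B r v), norm_nonneg v]

include hr0 hrB in
lemma opT_pos (v : E) : 0 ≤ RCLike.re (inner ℂ (opT B r v) v : ℂ) := by
  have h1 : (inner ℂ (opT B r v) v : ℂ) = inner ℂ v v - (r:ℂ) * inner ℂ (B v) (B v) := by
    rw [opT_apply, inner_sub_left, inner_smul_left, Complex.conj_ofReal,
      ContinuousLinearMap.adjoint_inner_left]
  rw [h1, map_sub, re_ofReal_mul', inner_self_eq_norm_sq, inner_self_eq_norm_sq]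
  have h2 : ‖B v‖ ≤ ‖B‖ * ‖v‖ := B.le_opNorm v
  have h2sq : ‖B v‖^2 ≤ ‖B‖^2 * ‖v‖^2 := by nlinarith [norm_nonneg (B v), norm_nonneg B, norm_nonneg v]
  have h3 : r * ‖B v‖^2 ≤ r * (‖B‖^2 * ‖v‖^2) := mul_le_mul_of_nonneg_left h2sq hr0.le
  have h4 : (r * ‖B‖^2) * ‖v‖^2 ≤ 1 * ‖v‖^2 := mul_le_mul_of_nonneg_right hrB (sq_nonneg _)
  nlinarith

lemma opT_pow_symm (k : ℕ) (v w : E) :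
    (inner ℂ ((opT B r ^ k) v) w : ℂ) = inner ℂ v ((opT B r ^ k) w) := by
  induction k generalizing v w with
  | zero => simp
  | succ k ih =>
    have e1 : ∀ z : E, (opT B r ^ (k+1)) z = (opT B r ^ k) (opT B r z) := by
      intro z; rw [pow_succ, ContinuousLinearMap.mul_apply]
    have e2 : ∀ z : E, (opT B r ^ (k+1)) z = opT B r ((opT B r ^ k) z) := by
      intro z; rw [pow_succ', ContinuousLinearMap.mul_apply]
    rw [e1 v, ih, opT_symm, ← e2 w]

include hr0 hrB in
lemma opT_pow_contract (k : ℕ) (v : E) : ‖(opT B r ^ k) v‖ ≤ ‖v‖ := by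
  induction k with
  | zero => simp
  | succ k ih =>
    rw [pow_succ', ContinuousLinearMap.mul_apply]
    exact le_trans (opT_contract hr0 hrB _) ih

include hr0 hrB in
lemma opT_exists_limit (v : E) :
    ∃ l, Tendsto (fun k => ((opT B r)^(2*k)) v) atTop (𝓝 l) := by
  apply cauchySeq_tendsto_of_complete
  have hanti : Antitone (fun k => ‖(opT B r ^ k) v‖^2) := by
    apply antitone_nat_of_succ_le
    intro k
    have e2 : (opT B r ^ (k+1)) v = opT B r ((opT B r ^ k) v) := by
      rw [pow_succ', ContinuousLinearMap.mul_apply]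
    rw [e2]
    exact pow_le_pow_left₀ (norm_nonneg _) (opT_contract hr0 hrB _) 2
  have hbdd : BddBelow (Set.range fun k => ‖(opT B r ^ k) v‖^2) :=
    ⟨0, by rintro y ⟨k, rfl⟩; positivity⟩
  have htend : Tendsto (fun k => ‖(opT B r ^ k) v‖^2)
      atTop (𝓝 (⨅ k, ‖(opT B r ^ k) v‖^2)) := tendsto_atTop_ciInf hanti hbdd
  have hge : ∀ k, (⨅ k, ‖(opT B r ^ k) v‖^2) ≤ ‖(opT B r ^ k) v‖^2 := fun k => ciInf_le hbdd k
  have hkey : ∀ p q : ℕ, RCLike.re (inner ℂ ((opT B r ^ (2*p)) v) ((opT B r ^ (2*q)) v) : ℂ)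
      = ‖(opT B r ^ (p+q)) v‖^2 := by
    intro p q
    have e1 : (inner ℂ ((opT B r ^ (2*p)) v) ((opT B r ^ (2*q)) v) : ℂ)
        = inner ℂ ((opT B r ^ (p+q)) v) ((opT B r ^ (p+q)) v) := by
      rw [opT_pow_symm (2*p), opT_pow_symm (p+q)]
      congr 1
      rw [← ContinuousLinearMap.mul_apply, ← ContinuousLinearMap.mul_apply, ← pow_add, ← pow_add]
      congr 2
      ring
    rw [e1, inner_self_eq_norm_sq]
  rw [Metric.cauchySeq_iff]
  intro ε hε
  have hev : ∀ᶠ k in atTop, ‖(opT B r ^ k) v‖^2 < (⨅ k, ‖(opT B r ^ k) v‖^2) + ε^2/2 :=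
    htend.eventually_lt_const (by nlinarith)
  obtain ⟨K, hK⟩ := eventually_atTop.mp hev
  refine ⟨K, fun p hp q hq => ?_⟩
  rw [dist_eq_norm]
  have hsq : ‖(opT B r ^ (2*p)) v - (opT B r ^ (2*q)) v‖^2
      = ‖(opT B r ^ (2*p)) v‖^2 - 2 * ‖(opT B r ^ (p+q)) v‖^2 + ‖(opT B r ^ (2*q)) v‖^2 := by
    rw [norm_sub_sq (𝕜 := ℂ), hkey]
  have h1 := hK (2*p) (by omega)
  have h2 := hK (2*q) (by omega)
  have h3 := hge (p+q)
  have h4 : ‖(opT B r ^ (2*p)) v - (opT B r ^ (2*q)) v‖^2 < ε^2 := by nlinarith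
  exact lt_of_pow_lt_pow_left₀ 2 hε.le h4

include hr0 hrB in
lemma opT_limit_ker {w l : E} (h : Tendsto (fun k => ((opT B r)^(2*k)) w) atTop (𝓝 l)) :
    B l = 0 := by
  have hfix : opT B r (opT B r l) = l := by
    have h1 : Tendsto (fun k => (opT B r ^ (2*(k+1))) w) atTop (𝓝 l) :=
      h.comp (tendsto_add_atTop_nat 1)
    have h2 : Tendsto (fun k => opT B r (opT B r ((opT B r ^ (2*k)) w))) atTop
        (𝓝 (opT B r (opT B r l))) :=
      ((opT B r).continuous.tendsto _).comp (((opT B r).continuous.tendsto _).comp h)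
    have h3 : (fun k => (opT B r ^ (2*(k+1))) w)
        = fun k => opT B r (opT B r ((opT B r ^ (2*k)) w)) := by
      funext k
      rw [show 2*(k+1) = 1+(1+2*k) by ring, pow_add, pow_one, pow_add, pow_one]
      simp [ContinuousLinearMap.mul_apply]
    rw [h3] at h1
    exact tendsto_nhds_unique h2 h1
  have hmz : (l - opT B r l) + opT B r (l - opT B r l) = 0 := by
    rw [map_sub, hfix]
    abel
  have hm0 : l - opT B r l = 0 := by
    have hre : 0 ≤ RCLike.re (inner ℂ (opT B r (l - opT B r l)) (l - opT B r l) : ℂ) :=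
      opT_pos hr0 hrB _
    have h0 : RCLike.re (inner ℂ ((l - opT B r l) + opT B r (l - opT B r l)) (l - opT B r l) : ℂ)
        = 0 := by rw [hmz]; simp
    rw [inner_add_left, map_add, inner_self_eq_norm_sq] at h0
    have h5 : ‖l - opT B r l‖ = 0 := by nlinarith [norm_nonneg (l - opT B r l)]
    exact norm_eq_zero.mp h5
  have hTl : opT B r l = l := (sub_eq_zero.mp hm0).symm
  have hAl : ContinuousLinearMap.adjoint B (B l) = 0 := by
    have h4 : l - (r:ℂ) • ContinuousLinearMap.adjoint B (B l) = l := by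
      rw [← opT_apply]; exact hTl
    have h5 : (r:ℂ) • ContinuousLinearMap.adjoint B (B l) = 0 := sub_eq_self.mp h4
    have hrne : (r:ℂ) ≠ 0 := by exact_mod_cast hr0.ne'
    exact (smul_eq_zero.mp h5).resolve_left hrne
  have h6 : ‖B l‖^2 = 0 := by
    rw [← inner_self_eq_norm_sq (𝕜 := ℂ), ← ContinuousLinearMap.adjoint_inner_left, hAl]
    simp
  have h7 : ‖B l‖ = 0 := by nlinarith [norm_nonneg (B l)]
  exact norm_eq_zero.mp h7

end OpT

open MeasureTheory Filter

section Aux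

variable {X : Type*} [MeasurableSpace X]
variable {E : Type*} [NormedAddCommGroup E] [InnerProductSpace ℂ E]

lemma sm_clm_apply (G : X → E →L[ℂ] E) (hG : ∀ v, StronglyMeasurable fun x => G x v)
    {f : X → E} (hf : StronglyMeasurable f) :
    StronglyMeasurable fun x => G x (f x) := by
  classical
  have key : ∀ φ : SimpleFunc X E, StronglyMeasurable fun x => G x (φ x) := by
    intro φ
    induction φ using SimpleFunc.induction with
    | @const c s hs =>
      have heq : (fun x => G x ((SimpleFunc.piecewise s hs (SimpleFunc.const X c)
          (SimpleFunc.const X 0)) x)) = s.piecewise (fun x => G x c) (fun x => G x 0) := by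
        funext x
        by_cases hx : x ∈ s <;>
          simp [SimpleFunc.piecewise_apply, Set.piecewise, hx]
      rw [heq]
      exact StronglyMeasurable.piecewise hs (hG c) (hG 0)
    | @add p q hpq hp hq =>
      have heq : (fun x => G x ((p + q) x)) = fun x => G x (p x) + G x (q x) := by
        funext x; simp [map_add]
      rw [heq]
      exact hp.add hq
  exact stronglyMeasurable_of_tendsto atTop (fun n => key (hf.approx n))
    (tendsto_pi_nhds.2 fun x => ((G x).continuous.tendsto _).comp (hf.tendsto_approx x))

lemma countable_index_of_orthonormal [TopologicalSpace.SeparableSpace E] {ι : Type*}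
    {f : ι → E} (hf : Orthonormal ℂ f) : Countable ι := by
  obtain ⟨u, hu⟩ := TopologicalSpace.exists_dense_seq E
  have h2 : ∀ i j : ι, i ≠ j → (1 : ℝ) < dist (f i) (f j) := by
    intro i j hij
    have hnorm : ‖f i - f j‖ ^ 2 = 2 := by
      rw [norm_sub_sq (𝕜 := ℂ), hf.2 hij]
      simp [hf.1 i, hf.1 j]
      norm_num
    rw [dist_eq_norm]
    nlinarith [norm_nonneg (f i - f j)]
  choose g hg using fun i : ι => hu.exists_dist_lt (f i) (by norm_num : (0:ℝ) < 1/2)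
  have hinj : Function.Injective g := by
    intro i j hgij
    by_contra hne
    have h3 := h2 i j hne
    have h4 : dist (f i) (f j) ≤ dist (f i) (u (g i)) + dist (u (g j)) (f j) := by
      rw [hgij]; exact dist_triangle _ _ _
    have h5 := hg i
    have h6 := hg j
    rw [dist_comm (u (g j)) (f j)] at h4
    linarith
  exact ⟨⟨g, hinj⟩⟩

lemma sm_adjoint_apply [CompleteSpace E] [TopologicalSpace.SeparableSpace E]
    (G : X → E →L[ℂ] E) (hG : ∀ v, StronglyMeasurable fun x => G x v) (v : E) :
    StronglyMeasurable fun x => ContinuousLinearMap.adjoint (G x) v := by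
  obtain ⟨w, b, -⟩ := exists_hilbertBasis ℂ E
  have hcw : Countable w := countable_index_of_orthonormal b.orthonormal
  have key : ∀ x, HasSum (fun i : w => (inner ℂ (G x (b i)) v : ℂ) • (b i : E))
      (ContinuousLinearMap.adjoint (G x) v) := by
    intro x
    have h1 := b.hasSum_repr (ContinuousLinearMap.adjoint (G x) v)
    have h2 : ∀ i : w, (b.repr (ContinuousLinearMap.adjoint (G x) v) i : ℂ)
        = inner ℂ (G x (b i)) v := fun i => by
      rw [b.repr_apply_apply, ContinuousLinearMap.adjoint_inner_right]
    have h3 : (fun i : w => (b.repr (ContinuousLinearMap.adjoint (G x) v) i : ℂ) • (b i : E))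
        = fun i : w => (inner ℂ (G x (b i)) v : ℂ) • (b i : E) := by
      funext i; rw [h2]
    rw [h3] at h1
    exact h1
  refine stronglyMeasurable_of_tendsto (atTop : Filter (Finset w))
    (f := fun (s : Finset w) x => ∑ i ∈ s, (inner ℂ (G x (b i)) v : ℂ) • (b i : E)) ?_ ?_
  · intro s
    exact Finset.stronglyMeasurable_fun_sum s fun i _ =>
      ((hG (b i)).inner (𝕜 := ℂ) stronglyMeasurable_const).smul
        (stronglyMeasurable_const : StronglyMeasurable fun _ : X => (b i : E))
  · exact tendsto_pi_nhds.2 fun x => key x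

end Aux

section Selection

variable {X : Type*} [MeasurableSpace X]
variable {E : Type*} [NormedAddCommGroup E] [InnerProductSpace ℂ E] [CompleteSpace E]
  [TopologicalSpace.SeparableSpace E]

lemma exists_kernel_selection (H' : X → E →L[ℂ] E) (C' : ℝ)
    (hm : ∀ v, StronglyMeasurable fun x => H' x v) (hb : ∀ x, ‖H' x‖ ≤ C') :
    ∃ P : ℕ → X → E, (∀ n, StronglyMeasurable (P n)) ∧ (∀ n x, H' x (P n x) = 0) ∧
      (∀ n, ∃ M : ℝ, ∀ x, ‖P n x‖ ≤ M) ∧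
      (∀ x, LinearMap.ker (H' x : E →ₗ[ℂ] E) ≠ ⊥ → ∃ n, P n x ≠ 0) := by
  obtain ⟨u, hu⟩ := TopologicalSpace.exists_dense_seq E
  set r : ℝ := (C'^2 + 1)⁻¹ with hrdef
  have hc0 : (0:ℝ) < C'^2 + 1 := by positivity
  have hr0 : 0 < r := inv_pos.mpr hc0
  have hrB : ∀ x, r * ‖H' x‖^2 ≤ 1 := by
    intro x
    have hCx : (0:ℝ) ≤ C' := le_trans (norm_nonneg (H' x)) (hb x)
    have h1 : ‖H' x‖^2 ≤ C'^2 + 1 := by nlinarith [norm_nonneg (H' x), hb x]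
    calc r * ‖H' x‖^2 ≤ r * (C'^2 + 1) := mul_le_mul_of_nonneg_left h1 hr0.le
      _ = 1 := by rw [hrdef]; field_simp
  have hTm : ∀ v, StronglyMeasurable fun x => opT (H' x) r v := by
    intro v
    have heq : (fun x => opT (H' x) r v)
        = fun x => v - (r:ℂ) • ContinuousLinearMap.adjoint (H' x) (H' x v) := by
      funext x; rw [opT_apply]
    rw [heq]
    have h2 : StronglyMeasurable fun x => ContinuousLinearMap.adjoint (H' x) (H' x v) :=
      sm_clm_apply (fun x => ContinuousLinearMap.adjoint (H' x)) (sm_adjoint_apply H' hm) (hm v)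
    exact stronglyMeasurable_const.sub (h2.const_smul ((r:ℝ) : ℂ))
  have hTpm : ∀ (k : ℕ) (v : E), StronglyMeasurable fun x => (opT (H' x) r ^ k) v := by
    intro k
    induction k with
    | zero =>
      intro v
      simp only [pow_zero, ContinuousLinearMap.one_apply]
      exact stronglyMeasurable_const
    | succ k ih =>
      intro v
      have heq : (fun x => (opT (H' x) r ^ (k+1)) v)
          = fun x => opT (H' x) r ((opT (H' x) r ^ k) v) := by
        funext x; rw [pow_succ', ContinuousLinearMap.mul_apply]
      rw [heq]
      exact sm_clm_apply (fun x => opT (H' x) r) hTm (ih v)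
  have hconv : ∀ (n : ℕ) (x : X),
      ∃ l, Filter.Tendsto (fun k => ((opT (H' x) r)^(2*k)) (u n)) Filter.atTop (nhds l) :=
    fun n x => opT_exists_limit hr0 (hrB x) (u n)
  choose P hP using hconv
  refine ⟨P, ?_, ?_, ?_, ?_⟩
  · intro n
    exact stronglyMeasurable_of_tendsto Filter.atTop (fun k => hTpm (2*k) (u n))
      (tendsto_pi_nhds.2 fun x => hP n x)
  · intro n x
    exact opT_limit_ker hr0 (hrB x) (hP n x)
  · intro n
    refine ⟨‖u n‖, fun x => ?_⟩
    exact le_of_tendsto (hP n x).norm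
      (Filter.Eventually.of_forall fun k => opT_pow_contract hr0 (hrB x) _ _)
  · intro x hx
    obtain ⟨v, hvker, hv0⟩ := (Submodule.ne_bot_iff _).mp hx
    have hvH : H' x v = 0 := LinearMap.mem_ker.mp hvker
    have hv : 0 < ‖v‖ := norm_pos_iff.mpr hv0
    obtain ⟨n, hn⟩ := hu.exists_dist_lt v (half_pos hv)
    refine ⟨n, ?_⟩
    have hb2 : ∀ k, ‖((opT (H' x) r)^(2*k)) (u n) - v‖ ≤ ‖u n - v‖ := by
      intro k
      calc ‖((opT (H' x) r)^(2*k)) (u n) - v‖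
          = ‖((opT (H' x) r)^(2*k)) (u n - v)‖ := by
            rw [map_sub, opT_pow_fixed_of_ker (H' x) r hvH]
        _ ≤ ‖u n - v‖ := opT_pow_contract hr0 (hrB x) _ _
    have hlim : Filter.Tendsto (fun k => ‖((opT (H' x) r)^(2*k)) (u n) - v‖)
        Filter.atTop (nhds (‖P n x - v‖)) :=
      ((hP n x).sub tendsto_const_nhds).norm
    have hPv : ‖P n x - v‖ ≤ ‖u n - v‖ := le_of_tendsto hlim (Filter.Eventually.of_forall hb2)
    have hdist : ‖u n - v‖ < ‖v‖/2 := by rw [← dist_eq_norm, dist_comm]; exact hn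
    intro hP0
    rw [hP0, zero_sub, norm_neg] at hPv
    linarith

end Selection

/-- A decomposable operator `𝓗 = ∫⊕ H(x) dx` on `L²(𝕋^d; E)` has trivial
kernel if and only if `H(x)` has trivial kernel for almost every `x ∈ 𝕋^d`. -/
theorem decomposable_trivial_kernel_iff
    {E : Type*} [NormedAddCommGroup E] [InnerProductSpace ℂ E] [CompleteSpace E]
    [TopologicalSpace.SeparableSpace E]
    {d : ℕ} (H : (Fin d → AddCircle (1:ℝ)) → (E →L[ℂ] E)) (C : ℝ)
    (hmeas : ∀ v : E, StronglyMeasurable fun x => H x v)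
    (hbound : ∀ᵐ x ∂(volume : Measure (Fin d → AddCircle (1:ℝ))), ‖H x‖ ≤ C)
    (𝓗 : Lp E 2 (volume : Measure (Fin d → AddCircle (1:ℝ))) →L[ℂ]
      Lp E 2 (volume : Measure (Fin d → AddCircle (1:ℝ))))
    (hdec : ∀ f : Lp E 2 (volume : Measure (Fin d → AddCircle (1:ℝ))),
      ∀ᵐ x ∂(volume : Measure (Fin d → AddCircle (1:ℝ))), (𝓗 f) x = H x (f x)) :
    LinearMap.ker (𝓗 : Lp E 2 (volume : Measure (Fin d → AddCircle (1:ℝ))) →ₗ[ℂ]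
      Lp E 2 (volume : Measure (Fin d → AddCircle (1:ℝ)))) = ⊥ ↔
      (∀ᵐ x ∂(volume : Measure (Fin d → AddCircle (1:ℝ))),
        LinearMap.ker (H x : E →ₗ[ℂ] E) = ⊥) := by
  classical
  constructor
  · -- hard direction
    intro hker
    by_contra hae
    obtain ⟨u, hu⟩ := TopologicalSpace.exists_dense_seq E
    have hC0 : (0:ℝ) ≤ max C 0 := le_max_right _ _
    have hNmeas : MeasurableSet {x : Fin d → AddCircle (1:ℝ) | ‖H x‖ ≤ max C 0} := by
      have hNeq : {x : Fin d → AddCircle (1:ℝ) | ‖H x‖ ≤ max C 0}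
          = ⋂ n, {x | ‖H x (u n)‖ ≤ (max C 0) * ‖u n‖} := by
        ext x
        simp only [Set.mem_setOf_eq, Set.mem_iInter]
        constructor
        · intro hx n
          calc ‖H x (u n)‖ ≤ ‖H x‖ * ‖u n‖ := (H x).le_opNorm _
            _ ≤ (max C 0) * ‖u n‖ := mul_le_mul_of_nonneg_right hx (norm_nonneg _)
        · intro hx
          refine (H x).opNorm_le_bound hC0 fun v => ?_
          have hcl : IsClosed {v : E | ‖H x v‖ ≤ (max C 0) * ‖v‖} :=
            isClosed_le ((H x).continuous.norm) (continuous_const.mul continuous_norm)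
          have hsubr : Set.range u ⊆ {v : E | ‖H x v‖ ≤ (max C 0) * ‖v‖} := by
            rintro - ⟨n, rfl⟩; exact hx n
          have h1 : closure (Set.range u) ⊆ {v : E | ‖H x v‖ ≤ (max C 0) * ‖v‖} :=
            closure_minimal hsubr hcl
          have hv : v ∈ closure (Set.range u) := by rw [hu.closure_range]; trivial
          exact h1 hv
      rw [hNeq]
      exact MeasurableSet.iInter fun n =>
        measurableSet_le (hmeas (u n)).norm.measurable measurable_const
    obtain ⟨H', hH'⟩ : ∃ H' : (Fin d → AddCircle (1:ℝ)) → E →L[ℂ] E,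
        H' = fun x => if ‖H x‖ ≤ max C 0 then H x else 0 := ⟨_, rfl⟩
    have hH'N : ∀ x, ‖H x‖ ≤ max C 0 → H' x = H x := by
      intro x hx; rw [hH']; exact if_pos hx
    have hH'meas : ∀ v, StronglyMeasurable fun x => H' x v := by
      intro v
      have heq : (fun x => H' x v)
          = ({x : Fin d → AddCircle (1:ℝ) | ‖H x‖ ≤ max C 0}).indicator
            (fun x => H x v) := by
        funext x
        rw [hH']
        by_cases hx : ‖H x‖ ≤ max C 0
        · rw [Set.indicator_of_mem
            (show x ∈ {x : Fin d → AddCircle (1:ℝ) | ‖H x‖ ≤ max C 0} from hx)]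
          simp only [if_pos hx]
        · rw [Set.indicator_of_notMem
            (show x ∉ {x : Fin d → AddCircle (1:ℝ) | ‖H x‖ ≤ max C 0} from hx)]
          simp only [if_neg hx]
          simp
      rw [heq]
      exact (hmeas v).indicator hNmeas
    have hH'bdd : ∀ x, ‖H' x‖ ≤ max C 0 := by
      intro x
      by_cases hx : ‖H x‖ ≤ max C 0
      · rw [hH'N x hx]; exact hx
      · rw [hH']; simp only [if_neg hx]; simpa using hC0
    obtain ⟨P, hPm, hPker, hPbdd, hPne⟩ := exists_kernel_selection H' (max C 0) hH'meas hH'bdd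
    have hbad : (volume : Measure (Fin d → AddCircle (1:ℝ)))
        {x | ¬ LinearMap.ker (H x : E →ₗ[ℂ] E) = ⊥} ≠ 0 := fun h0 => hae (ae_iff.mpr h0)
    have hNae : ∀ᵐ x ∂(volume : Measure (Fin d → AddCircle (1:ℝ))), ‖H x‖ ≤ max C 0 :=
      hbound.mono fun x hx => le_trans hx (le_max_left _ _)
    have hNc : (volume : Measure (Fin d → AddCircle (1:ℝ))) {x | ¬ ‖H x‖ ≤ max C 0} = 0 :=
      ae_iff.mp hNae
    have hsub : {x | ¬ LinearMap.ker (H x : E →ₗ[ℂ] E) = ⊥} ∩ {x | ‖H x‖ ≤ max C 0}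
        ⊆ ⋃ n, ({x : Fin d → AddCircle (1:ℝ) | ‖H x‖ ≤ max C 0} ∩ {x | P n x ≠ 0}) := by
      rintro x ⟨hxbad, hxN⟩
      have hker' : LinearMap.ker (H' x : E →ₗ[ℂ] E) ≠ ⊥ := by rw [hH'N x hxN]; exact hxbad
      obtain ⟨n, hn⟩ := hPne x hker'
      exact Set.mem_iUnion.mpr ⟨n, hxN, hn⟩
    have hUnion : (volume : Measure (Fin d → AddCircle (1:ℝ)))
        (⋃ n, ({x : Fin d → AddCircle (1:ℝ) | ‖H x‖ ≤ max C 0} ∩ {x | P n x ≠ 0})) ≠ 0 := by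
      intro h0
      apply hbad
      have h1 : (volume : Measure (Fin d → AddCircle (1:ℝ)))
          ({x | ¬ LinearMap.ker (H x : E →ₗ[ℂ] E) = ⊥} ∩ {x | ‖H x‖ ≤ max C 0}) = 0 :=
        measure_mono_null hsub h0
      have h2 : {x : Fin d → AddCircle (1:ℝ) | ¬ LinearMap.ker (H x : E →ₗ[ℂ] E) = ⊥}
          ⊆ ({x | ¬ LinearMap.ker (H x : E →ₗ[ℂ] E) = ⊥} ∩ {x | ‖H x‖ ≤ max C 0})
            ∪ {x | ¬ ‖H x‖ ≤ max C 0} := by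
        intro x hx
        by_cases hxN : ‖H x‖ ≤ max C 0
        · exact Or.inl ⟨hx, hxN⟩
        · exact Or.inr hxN
      exact measure_mono_null h2 (measure_union_null h1 hNc)
    obtain ⟨n, hn⟩ : ∃ n, (volume : Measure (Fin d → AddCircle (1:ℝ)))
        ({x : Fin d → AddCircle (1:ℝ) | ‖H x‖ ≤ max C 0} ∩ {x | P n x ≠ 0}) ≠ 0 := by
      by_contra h
      push_neg at h
      exact hUnion (measure_iUnion_null h)
    have hSel : MeasurableSet
        ({x : Fin d → AddCircle (1:ℝ) | ‖H x‖ ≤ max C 0} ∩ {x | P n x ≠ 0}) := by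
      refine hNmeas.inter ?_
      have h1 : {x : Fin d → AddCircle (1:ℝ) | P n x ≠ 0} = (fun x => ‖P n x‖) ⁻¹' ({0}ᶜ) := by
        ext x; simp [norm_eq_zero]
      rw [h1]
      exact (hPm n).norm.measurable (measurableSet_singleton (0:ℝ)).compl
    obtain ⟨M, hM⟩ := hPbdd n
    obtain ⟨g, hg⟩ : ∃ g : (Fin d → AddCircle (1:ℝ)) → E,
        g = ({x : Fin d → AddCircle (1:ℝ) | ‖H x‖ ≤ max C 0} ∩ {x | P n x ≠ 0}).indicator (P n) :=
      ⟨_, rfl⟩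
    have hgm : StronglyMeasurable g := by rw [hg]; exact (hPm n).indicator hSel
    have hgbdd : ∀ x, ‖g x‖ ≤ |M| := by
      intro x
      rw [hg]
      by_cases hx : x ∈ ({x : Fin d → AddCircle (1:ℝ) | ‖H x‖ ≤ max C 0} ∩ {x | P n x ≠ 0})
      · rw [Set.indicator_of_mem hx]
        exact le_trans (hM x) (le_abs_self M)
      · rw [Set.indicator_of_notMem hx]
        simpa using abs_nonneg M
    have hmem : MemLp g 2 (volume : Measure (Fin d → AddCircle (1:ℝ))) :=
      (memLp_top_of_bound hgm.aestronglyMeasurable _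
        (Filter.Eventually.of_forall hgbdd)).mono_exponent le_top
    have hgker : ∀ x, H x (g x) = 0 := by
      intro x
      by_cases hx : x ∈ ({x : Fin d → AddCircle (1:ℝ) | ‖H x‖ ≤ max C 0} ∩ {x | P n x ≠ 0})
      · rw [hg, Set.indicator_of_mem hx, ← hH'N x hx.1]
        exact hPker n x
      · rw [hg, Set.indicator_of_notMem hx, map_zero]
    have h𝓗f : 𝓗 (hmem.toLp g) = 0 := by
      apply Lp.ext
      filter_upwards [hdec (hmem.toLp g), hmem.coeFn_toLp,
        Lp.coeFn_zero E 2 (volume : Measure (Fin d → AddCircle (1:ℝ)))] with x h1 h2 h3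
      rw [h1, h2, hgker x, h3]
      simp
    have hne : hmem.toLp g ≠ 0 := by
      intro h0
      have h1 : g =ᵐ[(volume : Measure (Fin d → AddCircle (1:ℝ)))] 0 := by
        have h2 := hmem.coeFn_toLp
        rw [h0] at h2
        exact h2.symm.trans (Lp.coeFn_zero E 2 _)
      have h2 : (volume : Measure (Fin d → AddCircle (1:ℝ)))
          {x | ¬ g x = (0 : (Fin d → AddCircle (1:ℝ)) → E) x} = 0 := ae_iff.mp h1
      apply hn
      refine measure_mono_null ?_ h2
      intro x hx
      simp only [Set.mem_setOf_eq, Pi.zero_apply]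
      rw [hg, Set.indicator_of_mem hx]
      exact hx.2
    exact hne (LinearMap.ker_eq_bot'.mp hker _ h𝓗f)
  · -- easy direction
    intro hae
    rw [LinearMap.ker_eq_bot']
    intro f hf
    have h0 : (⇑(𝓗 f) : _ → E) =ᵐ[(volume : Measure (Fin d → AddCircle (1:ℝ)))] 0 := by
      rw [show 𝓗 f = 0 from hf]; exact Lp.coeFn_zero E 2 _
    apply Lp.ext
    filter_upwards [hdec f, h0, hae,
      Lp.coeFn_zero E 2 (volume : Measure (Fin d → AddCircle (1:ℝ)))] with x h1 h2 h3 h4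
    have h5 : H x (f x) = 0 := by rw [← h1]; exact h2
    have h6 : f x = 0 := LinearMap.ker_eq_bot'.mp h3 (f x) h5
    rw [h6, h4]
    simp
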